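/- Let X = (X_1,...,X_n) be i.u.d. and let Y =d X↓^μ be a rearrangement of X satisfying the strong rank independence condition. If the value data X↓ and the arrival data μ are independent, then Y is a constant rearrangement: μ almost surely takes a single value in S_n, i.e., Y =d X↓^s for some fixed permutation s ∈ S_n. -/

import Mathlib

open MeasureTheory
open scoped ENNReal

/-- `X = (X_1,...,X_n)` is i.u.d. -/
def IsIUD {Ω : Type} [MeasurableSpace Ω] (P : Measure Ω) {n : ℕ}
    (X : Ω → Fin n → ℝ) : Prop :=
  (∀ i, Measurable fun ω => X ω i) ∧
  ProbabilityTheory.iIndepFun (fun i ω => X ω i) P ∧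
  ∀ i, P.map (fun ω => X ω i) = volume.restrict (Set.Icc (0:ℝ) 1)

/-- The ascending arrangement of a tuple. -/
noncomputable def ascArr (n : ℕ) (a : Fin n → ℝ) : Fin n → ℝ := a ∘ Tuple.sort a

/-- The descending arrangement of a tuple. -/
noncomputable def descArr (n : ℕ) (a : Fin n → ℝ) : Fin n → ℝ := fun i => ascArr n a i.rev

/-- The initial rank (0-indexed: `irank y k` is the paper's `R_{k+1}`). -/
noncomputable def irank {n : ℕ} (y : Fin n → ℝ) (k : Fin n) : ℕ :=
  1 + (Finset.univ.filter (fun i : Fin n => i < k ∧ y k < y i)).card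

section Aux
open Finset


lemma measurable_sortPiece {n : ℕ} (σ : Equiv.Perm (Fin n)) :
    MeasurableSet {a : Fin n → ℝ | Tuple.sort a = σ} := by
  have h : {a : Fin n → ℝ | Tuple.sort a = σ}
      = (⋂ i, ⋂ j, {a : Fin n → ℝ | i ≤ j → a (σ i) ≤ a (σ j)}) ∩
        ⋂ i, ⋂ j, {a : Fin n → ℝ | i < j → a (σ i) = a (σ j) → σ i < σ j} := by
    ext a
    simp only [Set.mem_setOf_eq, Set.mem_inter_iff, Set.mem_iInter]
    rw [show (Tuple.sort a = σ) ↔ (σ = Tuple.sort a) from eq_comm, Tuple.eq_sort_iff]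
    constructor
    · rintro ⟨h1, h2⟩
      exact ⟨fun i j hij => h1 hij, fun i j hij he => h2 i j hij he⟩
    · rintro ⟨h1, h2⟩
      exact ⟨fun i j hij => h1 i j hij, fun i j hij he => h2 i j hij he⟩
  rw [h]
  apply MeasurableSet.inter
  · refine MeasurableSet.iInter fun i => MeasurableSet.iInter fun j => ?_
    by_cases hij : i ≤ j
    · have : {a : Fin n → ℝ | i ≤ j → a (σ i) ≤ a (σ j)} = {a | a (σ i) ≤ a (σ j)} := by
        ext a; simp [hij]
      rw [this]
      exact measurableSet_le (measurable_pi_apply _) (measurable_pi_apply _)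
    · have : {a : Fin n → ℝ | i ≤ j → a (σ i) ≤ a (σ j)} = Set.univ := by
        ext a; simp [hij]
      rw [this]; exact MeasurableSet.univ
  · refine MeasurableSet.iInter fun i => MeasurableSet.iInter fun j => ?_
    by_cases hij : i < j
    · by_cases hσ : σ i < σ j
      · have : {a : Fin n → ℝ | i < j → a (σ i) = a (σ j) → σ i < σ j} = Set.univ := by
          ext a; simp [hij, hσ]
        rw [this]; exact MeasurableSet.univ
      · have : {a : Fin n → ℝ | i < j → a (σ i) = a (σ j) → σ i < σ j}
            = {a | ¬ a (σ i) = a (σ j)} := by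
          ext a; simp [hij, hσ]
        have e2 : {a : Fin n → ℝ | ¬ a (σ i) = a (σ j)}
            = {a : Fin n → ℝ | a (σ i) < a (σ j)} ∪ {a : Fin n → ℝ | a (σ j) < a (σ i)} := by
          ext a; simp only [Set.mem_setOf_eq, Set.mem_union]
          constructor
          · intro h; exact lt_or_gt_of_ne h
          · intro h; rcases h with h | h; exact ne_of_lt h; exact ne_of_gt h
        rw [this, e2]
        have m1 : Measurable fun a : Fin n → ℝ => a (σ i) := measurable_pi_apply _
        have m2 : Measurable fun a : Fin n → ℝ => a (σ j) := measurable_pi_apply _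
        exact (measurableSet_lt m1 m2).union (measurableSet_lt m2 m1)
    · have : {a : Fin n → ℝ | i < j → a (σ i) = a (σ j) → σ i < σ j} = Set.univ := by
        ext a; simp [hij]
      rw [this]; exact MeasurableSet.univ

lemma measurable_ascArr {n : ℕ} (i : Fin n) : Measurable fun a : Fin n → ℝ => ascArr n a i := by
  have h : (fun a : Fin n → ℝ => ascArr n a i)
      = fun a => ∑ σ : Equiv.Perm (Fin n),
          Set.indicator {a : Fin n → ℝ | Tuple.sort a = σ} (fun a => a (σ i)) a := by
    funext a
    rw [Finset.sum_eq_single (Tuple.sort a)]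
    · simp [Set.indicator, ascArr]
    · intro σ _ hσ
      rw [Set.indicator_of_notMem]
      intro h
      exact absurd (Set.mem_setOf_eq ▸ h).symm hσ
    · intro h; exact absurd (Finset.mem_univ _) h
  rw [h]
  exact Finset.measurable_sum _ fun σ _ =>
    ((measurable_pi_apply _).indicator (measurable_sortPiece σ))

lemma measurable_descArr {n : ℕ} (i : Fin n) :
    Measurable fun a : Fin n → ℝ => descArr n a i := measurable_ascArr _


def pcode {n : ℕ} (s : Equiv.Perm (Fin n)) (ℓ : Fin n) : ℕ :=
  1 + (Finset.univ.filter (fun i : Fin n => i < ℓ ∧ s i < s ℓ)).card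

lemma card_lt_val {n : ℕ} (m : Fin n) :
    (Finset.univ.filter (fun v : Fin n => v < m)).card = (m : ℕ) := by
  have : Finset.univ.filter (fun v : Fin n => v < m) = Finset.Iio m := by
    ext v; simp
  rw [this, Fin.card_Iio]

lemma pcode_ident {n : ℕ} (s : Equiv.Perm (Fin n)) (ℓ : Fin n) :
    pcode s ℓ + (Finset.univ.filter (fun j : Fin n => ℓ < j ∧ s j < s ℓ)).card
      = 1 + (s ℓ : ℕ) := by
  have hsplit : (Finset.univ.filter (fun i : Fin n => s i < s ℓ))
      = (Finset.univ.filter (fun i : Fin n => i < ℓ ∧ s i < s ℓ))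
        ∪ (Finset.univ.filter (fun j : Fin n => ℓ < j ∧ s j < s ℓ)) := by
    ext i
    simp only [mem_filter, mem_union, mem_univ, true_and]
    constructor
    · intro h
      rcases lt_trichotomy i ℓ with hc | hc | hc
      · exact Or.inl ⟨hc, h⟩
      · exact absurd (hc ▸ h) (lt_irrefl _)
      · exact Or.inr ⟨hc, h⟩
    · rintro (⟨_, h⟩ | ⟨_, h⟩) <;> exact h
  have hdisj : Disjoint (Finset.univ.filter (fun i : Fin n => i < ℓ ∧ s i < s ℓ))
      (Finset.univ.filter (fun j : Fin n => ℓ < j ∧ s j < s ℓ)) := by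
    rw [Finset.disjoint_left]
    intro i hi hj
    simp only [mem_filter] at hi hj
    exact absurd (lt_trans hi.2.1 hj.2.1) (lt_irrefl _)
  have hcard : (Finset.univ.filter (fun i : Fin n => s i < s ℓ)).card = (s ℓ : ℕ) := by
    rw [← card_lt_val (s ℓ)]
    apply Finset.card_bij (fun i _ => s i)
    · intro i hi; simp only [mem_filter, mem_univ, true_and] at hi ⊢; exact hi
    · intro i _ j _ h; exact s.injective h
    · intro v hv
      simp only [mem_filter, mem_univ, true_and] at hv
      exact ⟨s.symm v, by simp [hv], by simp⟩
  rw [pcode, Nat.add_assoc, ← Finset.card_union_of_disjoint hdisj, ← hsplit, hcard]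

lemma pcode_aux {n : ℕ} (s t : Equiv.Perm (Fin n)) (ℓ : Fin n)
    (htail : ∀ j : Fin n, ℓ < j → s j = t j)
    (hc : pcode s ℓ = pcode t ℓ) : ¬ ((s ℓ : ℕ) < (t ℓ : ℕ)) := by
  intro hlt
  have ids := pcode_ident s ℓ
  have idt := pcode_ident t ℓ
  have hAt : (univ.filter (fun j : Fin n => ℓ < j ∧ t j < t ℓ))
      = (univ.filter (fun j : Fin n => ℓ < j ∧ s j < s ℓ))
        ∪ (univ.filter (fun j : Fin n => ℓ < j ∧ s ℓ ≤ s j ∧ s j < t ℓ)) := by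
    ext j
    simp only [mem_filter, mem_union, mem_univ, true_and]
    constructor
    · rintro ⟨hj, hv⟩
      rw [← htail j hj] at hv
      rcases lt_or_ge (s j) (s ℓ) with h | h
      · exact Or.inl ⟨hj, h⟩
      · exact Or.inr ⟨hj, h, hv⟩
    · rintro (⟨hj, hv⟩ | ⟨hj, h1, h2⟩)
      · refine ⟨hj, ?_⟩
        rw [← htail j hj]
        exact lt_of_lt_of_le hv (by exact Fin.le_def.mpr (le_of_lt hlt))
      · exact ⟨hj, by rw [← htail j hj]; exact h2⟩
  have hdisj : Disjoint (univ.filter (fun j : Fin n => ℓ < j ∧ s j < s ℓ))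
      (univ.filter (fun j : Fin n => ℓ < j ∧ s ℓ ≤ s j ∧ s j < t ℓ)) := by
    rw [Finset.disjoint_left]
    intro j h1 h2
    simp only [mem_filter] at h1 h2
    exact absurd h1.2.2 (not_lt.mpr h2.2.2.1)
  have hbound : (univ.filter (fun j : Fin n => ℓ < j ∧ s ℓ ≤ s j ∧ s j < t ℓ)).card
      ≤ (Finset.Ioo (s ℓ) (t ℓ)).card := by
    apply Finset.card_le_card_of_injOn (fun j => s j)
    · intro j hj
      simp only [Finset.mem_coe, mem_filter, mem_univ, true_and] at hj ⊢
      rw [Finset.mem_Ioo]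
      refine ⟨lt_of_le_of_ne hj.2.1 ?_, hj.2.2⟩
      intro h
      exact absurd (s.injective h.symm) (ne_of_gt hj.1)
    · intro a _ b _ h
      exact s.injective h
  rw [Fin.card_Ioo] at hbound
  rw [hAt, Finset.card_union_of_disjoint hdisj] at idt
  rw [hc] at ids
  omega

lemma pcode_inj {n : ℕ} (k : Fin n) (s t : Equiv.Perm (Fin n))
    (hpre : ∀ i : Fin n, i < k → s i = t i)
    (hcode : ∀ ℓ : Fin n, k < ℓ → pcode s ℓ = pcode t ℓ) : s = t := by
  have H : ∀ M : ℕ, ∀ ℓ : Fin n, n - M ≤ (ℓ : ℕ) → k < ℓ → s ℓ = t ℓ := by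
    intro M
    induction M with
    | zero => intro ℓ h _; exact absurd ℓ.isLt (by omega)
    | succ M ih =>
      intro ℓ hle hk
      have htail : ∀ j : Fin n, ℓ < j → s j = t j := by
        intro j hj
        have hj' : (ℓ : ℕ) < (j : ℕ) := hj
        exact ih j (by omega) (lt_trans hk hj)
      have h1 := pcode_aux s t ℓ htail (hcode ℓ hk)
      have h2 := pcode_aux t s ℓ (fun j hj => (htail j hj).symm) (hcode ℓ hk).symm
      have hv : ((s ℓ : Fin n) : ℕ) = ((t ℓ : Fin n) : ℕ) := by omega
      exact Fin.val_injective hv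
  have Hgt : ∀ ℓ : Fin n, k < ℓ → s ℓ = t ℓ := fun ℓ h => H n ℓ (by omega) h
  have hofk : ∀ i : Fin n, i ≠ k → s i = t i := by
    intro i hi
    rcases lt_or_gt_of_ne hi with h | h
    · exact hpre i h
    · exact Hgt i h
  have hkk : s k = t k := by
    by_contra hne
    set p := t.symm (s k) with hp
    have hsp : t p = s k := t.apply_symm_apply _
    have hpk : p ≠ k := by
      intro h
      rw [h] at hsp
      exact hne hsp.symm
    have := hofk p hpk
    rw [hsp] at this
    exact hpk (s.injective this)
  exact Equiv.ext (fun i => by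
    by_cases h : i = k
    · rw [h]; exact hkk
    · exact hofk i h)



lemma irank_comp {n : ℕ} (x : Fin n → ℝ) (hx : StrictAnti x) (s : Equiv.Perm (Fin n))
    (ℓ : Fin n) : irank (fun i => x (s i)) ℓ = pcode s ℓ := by
  unfold irank pcode
  congr 1
  apply Finset.card_bij (fun i _ => i)
  · intro i hi
    simp only [mem_filter, mem_univ, true_and] at hi ⊢
    exact ⟨hi.1, (hx.lt_iff_gt).mp hi.2⟩
  · intro a b _ _ h; exact h
  · intro i hi
    simp only [mem_filter, mem_univ, true_and] at hi
    refine ⟨i, ?_, rfl⟩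
    simp only [mem_filter, mem_univ, true_and]
    exact ⟨hi.1, (hx.lt_iff_gt).mpr hi.2⟩

lemma measurable_irank {n : ℕ} (ℓ : Fin n) : Measurable fun y : Fin n → ℝ => irank y ℓ := by
  unfold irank
  apply Measurable.add measurable_const
  have h : (fun y : Fin n → ℝ => (Finset.univ.filter (fun i : Fin n => i < ℓ ∧ y ℓ < y i)).card)
      = fun y => ∑ i : Fin n, if i < ℓ ∧ y ℓ < y i then 1 else 0 := by
    funext y; rw [Finset.card_filter]
  rw [h]
  apply Finset.measurable_sum
  intro i _
  by_cases hi : i < ℓ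
  · have : (fun y : Fin n → ℝ => if i < ℓ ∧ y ℓ < y i then 1 else 0)
        = fun y => if y ℓ < y i then 1 else 0 := by
      funext y; by_cases h : y ℓ < y i <;> simp [hi, h]
    rw [this]
    exact Measurable.ite (measurableSet_lt (measurable_pi_apply _) (measurable_pi_apply _))
      measurable_const measurable_const
  · have : (fun y : Fin n → ℝ => if i < ℓ ∧ y ℓ < y i then 1 else 0) = fun _ => 0 := by
      funext y; simp [hi]
    rw [this]; exact measurable_const

noncomputable def pat {n : ℕ} (k : Fin n) (z : {i : Fin n // i ≤ k} → ℝ) : ℕ :=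
  1 + (Finset.univ.filter
    (fun i : {i : Fin n // i ≤ k} => i.1 < k ∧ z ⟨k, le_refl k⟩ < z i)).card

lemma measurable_pat {n : ℕ} (k : Fin n) : Measurable (pat k) := by
  unfold pat
  apply Measurable.add measurable_const
  have h : (fun z : {i : Fin n // i ≤ k} → ℝ => (Finset.univ.filter
      (fun i : {i : Fin n // i ≤ k} => i.1 < k ∧ z ⟨k, le_refl k⟩ < z i)).card)
      = fun z => ∑ i : {i : Fin n // i ≤ k}, if i.1 < k ∧ z ⟨k, le_refl k⟩ < z i then 1 else 0 := by
    funext z; rw [Finset.card_filter]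
  rw [h]
  apply Finset.measurable_sum
  intro i _
  by_cases hi : i.1 < k
  · have : (fun z : {i : Fin n // i ≤ k} → ℝ => if i.1 < k ∧ z ⟨k, le_refl k⟩ < z i then 1 else 0)
        = fun z => if z ⟨k, le_refl k⟩ < z i then 1 else 0 := by
      funext z; by_cases h : z ⟨k, le_refl k⟩ < z i <;> simp [hi, h]
    rw [this]
    exact Measurable.ite (measurableSet_lt (measurable_pi_apply _) (measurable_pi_apply _))
      measurable_const measurable_const
  · have : (fun z : {i : Fin n // i ≤ k} → ℝ => if i.1 < k ∧ z ⟨k, le_refl k⟩ < z i then 1 else 0)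
        = fun _ => 0 := by
      funext z; simp [hi]
    rw [this]; exact measurable_const

lemma pat_comp {n : ℕ} (k : Fin n) (x : Fin n → ℝ) (hx : StrictAnti x)
    (s : Equiv.Perm (Fin n)) :
    pat k (fun i : {i : Fin n // i ≤ k} => x (s i.1)) = pcode s k := by
  unfold pat pcode
  congr 1
  apply Finset.card_bij (fun i _ => i.1)
  · intro i hi
    simp only [mem_filter, mem_univ, true_and] at hi ⊢
    exact ⟨hi.1, (hx.lt_iff_gt).mp hi.2⟩
  · intro a b _ _ h; exact Subtype.ext h
  · intro i hi
    simp only [mem_filter, mem_univ, true_and] at hi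
    refine ⟨⟨i, le_of_lt hi.1⟩, ?_, rfl⟩
    simp only [mem_filter, mem_univ, true_and]
    exact ⟨hi.1, (hx.lt_iff_gt).mpr hi.2⟩

lemma meas_inter_conull {α : Type*} [MeasurableSpace α] (μ : Measure α) {G : Set α}
    (h : μ Gᶜ = 0) (U : Set α) : μ (U ∩ G) = μ U := by
  apply le_antisymm (measure_mono Set.inter_subset_left)
  have hU : U = (U ∩ G) ∪ (U ∩ Gᶜ) := by
    rw [← Set.inter_union_distrib_left, Set.union_compl_self, Set.inter_univ]
  calc μ U ≤ μ (U ∩ G) + μ (U ∩ Gᶜ) := by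
        conv_lhs => rw [hU]
        exact measure_union_le _ _
    _ ≤ μ (U ∩ G) + 0 := add_le_add le_rfl (le_trans (measure_mono Set.inter_subset_right) h.le)
    _ = μ (U ∩ G) := add_zero _

lemma measurableSet_SA {n : ℕ} : MeasurableSet {x : Fin n → ℝ | StrictAnti x} := by
  have h : {x : Fin n → ℝ | StrictAnti x} = ⋂ i, ⋂ j, {x : Fin n → ℝ | i < j → x j < x i} := by
    ext x
    simp only [Set.mem_setOf_eq, Set.mem_iInter]
    exact ⟨fun hx i j hij => hx hij, fun hx i j hij => hx i j hij⟩
  rw [h]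
  refine MeasurableSet.iInter fun i => MeasurableSet.iInter fun j => ?_
  by_cases hij : i < j
  · have : {x : Fin n → ℝ | i < j → x j < x i} = {x : Fin n → ℝ | x j < x i} := by
      ext x; simp [hij]
    rw [this]
    exact measurableSet_lt (measurable_pi_apply _) (measurable_pi_apply _)
  · have : {x : Fin n → ℝ | i < j → x j < x i} = Set.univ := by
      ext x; simp [hij]
    rw [this]; exact MeasurableSet.univ

end Aux

set_option maxHeartbeats 2000000 in
open Finset in
theorem strong_rank_independence_and_indep_implies_constant {n : ℕ}
    {Ω₁ : Type} [MeasurableSpace Ω₁] (P₁ : Measure Ω₁) [IsProbabilityMeasure P₁]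
    (X : Ω₁ → Fin n → ℝ) (hX : IsIUD P₁ X)
    (μ : Ω₁ → Equiv.Perm (Fin n))
    (hμmeas : ∀ s : Equiv.Perm (Fin n), MeasurableSet {ω | μ ω = s})
    (hindep : ∀ (s : Equiv.Perm (Fin n)) (B : Set (Fin n → ℝ)), MeasurableSet B →
      P₁ ({ω | descArr n (X ω) ∈ B} ∩ {ω | μ ω = s})
        = P₁ {ω | descArr n (X ω) ∈ B} * P₁ {ω | μ ω = s})
    {Ω₂ : Type} [MeasurableSpace Ω₂] (P₂ : Measure Ω₂) [IsProbabilityMeasure P₂]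
    (Y : Ω₂ → Fin n → ℝ) (hY : Measurable Y)
    (hlaw : P₂.map Y = P₁.map (fun ω i => descArr n (X ω) (μ ω i)))
    (hSRI : ∀ k : Fin n, ProbabilityTheory.IndepFun
      (fun ω (ℓ : {ℓ : Fin n // k < ℓ}) => irank (Y ω) ℓ.1)
      (fun ω (i : {i : Fin n // i ≤ k}) => Y ω i.1) P₂) :
    ∃ s : Equiv.Perm (Fin n), P₁ {ω | μ ω = s} = 1 ∧
      P₂.map Y = P₁.map (fun ω i => descArr n (X ω) (s i)) := by
  classical
  obtain ⟨hXm, hXind, hXlaw⟩ := hX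
  have hXmeas : Measurable X := measurable_pi_lambda _ hXm
  set D : Ω₁ → Fin n → ℝ := (fun ω => descArr n (X ω)) with hDdef
  have hD : Measurable D :=
    measurable_pi_lambda _ (fun i => (measurable_descArr i).comp hXmeas)
  set Z : Ω₁ → Fin n → ℝ := (fun ω i => descArr n (X ω) (μ ω i)) with hZdef
  have hZD : ∀ ω i, Z ω i = D ω (μ ω i) := fun ω i => rfl
  have hZs : ∀ (s : Equiv.Perm (Fin n)) (ω : Ω₁), μ ω = s → Z ω = fun i => D ω (s i) := by
    intro s ω hs
    funext i
    rw [hZD, hs]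
  have hZm : Measurable Z := by
    apply measurable_pi_lambda
    intro i
    have h : (fun ω => Z ω i) = fun ω => ∑ s : Equiv.Perm (Fin n),
        Set.indicator {ω | μ ω = s} (fun ω => D ω (s i)) ω := by
      funext ω
      rw [Finset.sum_eq_single (μ ω)]
      · rw [Set.indicator_of_mem (show ω ∈ {ω' | μ ω' = μ ω} from rfl)]
      · intro s _ hs
        rw [Set.indicator_of_notMem]
        intro h
        exact hs ((Set.mem_setOf_eq ▸ h).symm ▸ rfl)
      · intro h; exact absurd (Finset.mem_univ _) h
    rw [h]
    exact Finset.measurable_sum _ fun s _ =>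
      ((measurable_pi_apply (s i)).comp hD).indicator (hμmeas s)
  set ν : Measure (Fin n → ℝ) := P₁.map D with hνdef
  have hνprob : IsProbabilityMeasure ν := Measure.isProbabilityMeasure_map hD.aemeasurable
  set p : Equiv.Perm (Fin n) → ℝ≥0∞ := fun s => P₁ {ω | μ ω = s} with hpdef
  have hpart : ∀ (A : Set Ω₁), MeasurableSet A →
      P₁ A = ∑ s : Equiv.Perm (Fin n), P₁ (A ∩ {ω | μ ω = s}) := by
    intro A hA
    have hcover : A = ⋃ s : Equiv.Perm (Fin n), (A ∩ {ω | μ ω = s}) := by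
      ext ω
      simp only [Set.mem_iUnion, Set.mem_inter_iff, Set.mem_setOf_eq]
      exact ⟨fun h => ⟨μ ω, h, rfl⟩, fun ⟨s, h, _⟩ => h⟩
    have hdisj : Pairwise (Function.onFun Disjoint
        (fun s : Equiv.Perm (Fin n) => A ∩ {ω | μ ω = s})) := by
      intro s t hst
      apply Set.disjoint_left.mpr
      rintro ω ⟨_, h1⟩ ⟨_, h2⟩
      simp only [Set.mem_setOf_eq] at h1 h2
      exact hst (h1.symm.trans h2)
    conv_lhs => rw [hcover]
    rw [measure_iUnion hdisj (fun s => hA.inter (hμmeas s)), tsum_fintype]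
  have hpsum : ∑ s : Equiv.Perm (Fin n), p s = 1 := by
    have h := hpart Set.univ MeasurableSet.univ
    simp only [Set.univ_inter, measure_univ] at h
    exact h.symm
  have hIccCoordNull : ∀ i : Fin n, P₁ {ω | X ω i ∉ Set.Icc (0:ℝ) 1} = 0 := by
    intro i
    have he : {ω | X ω i ∉ Set.Icc (0:ℝ) 1} = (fun ω => X ω i) ⁻¹' (Set.Icc (0:ℝ) 1)ᶜ := rfl
    rw [he, ← Measure.map_apply (hXm i) measurableSet_Icc.compl, hXlaw i,
      Measure.restrict_apply measurableSet_Icc.compl]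
    simp
  have hIccNull : P₁ {ω | ¬ ∀ i, X ω i ∈ Set.Icc (0:ℝ) 1} = 0 := by
    refine measure_mono_null ?_ (measure_iUnion_null fun i => hIccCoordNull i)
    intro ω hω
    simp only [Set.mem_setOf_eq, not_forall] at hω
    obtain ⟨i, hi⟩ := hω
    exact Set.mem_iUnion.mpr ⟨i, hi⟩
  have hpairNull : ∀ i j : Fin n, i ≠ j → P₁ {ω | X ω i = X ω j} = 0 := by
    intro i j hij
    have hind2 : ProbabilityTheory.IndepFun (fun ω => X ω i) (fun ω => X ω j) P₁ :=
      hXind.indepFun hij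
    have hmap : Measure.map (fun ω => (X ω i, X ω j)) P₁
        = (Measure.map (fun ω => X ω i) P₁).prod (Measure.map (fun ω => X ω j) P₁) :=
      (ProbabilityTheory.indepFun_iff_map_prod_eq_prod_map_map (hXm i).aemeasurable
        (hXm j).aemeasurable).mp hind2
    have hdiagM : MeasurableSet {q : ℝ × ℝ | q.1 = q.2} :=
      measurableSet_eq_fun measurable_fst measurable_snd
    have he : {ω | X ω i = X ω j} = (fun ω => (X ω i, X ω j)) ⁻¹' {q : ℝ × ℝ | q.1 = q.2} := rfl
    rw [he, ← Measure.map_apply ((hXm i).prodMk (hXm j)) hdiagM, hmap, hXlaw i, hXlaw j]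
    rw [Measure.prod_apply hdiagM]
    have hz : ∀ x : ℝ, (volume.restrict (Set.Icc (0:ℝ) 1)) (Prod.mk x ⁻¹' {q : ℝ × ℝ | q.1 = q.2}) = 0 := by
      intro x
      have : (Prod.mk x ⁻¹' {q : ℝ × ℝ | q.1 = q.2}) = {x} := by
        ext y; simp [eq_comm]
      rw [this]
      exact measure_singleton x
    simp only [hz]
    simp
  have hinjNull : P₁ {ω | ¬ Function.Injective (X ω)} = 0 := by
    have hnull2 : P₁ (⋃ i : Fin n, ⋃ j : Fin n, {ω | i ≠ j ∧ X ω i = X ω j}) = 0 := by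
      refine measure_iUnion_null fun i => measure_iUnion_null fun j => ?_
      by_cases hij : i = j
      · have he2 : {ω | i ≠ j ∧ X ω i = X ω j} = ∅ := by
          ext ω; simp [hij]
        rw [he2]; exact measure_empty
      · exact measure_mono_null (fun ω hω => hω.2) (hpairNull i j hij)
    refine measure_mono_null ?_ hnull2
    intro ω hω
    simp only [Set.mem_setOf_eq, Function.Injective, not_forall] at hω
    obtain ⟨i, j, hEq, hne⟩ := hω
    exact Set.mem_iUnion.mpr ⟨i, Set.mem_iUnion.mpr ⟨j, ⟨hne, hEq⟩⟩⟩
  have hSADNull : P₁ {ω | ¬ StrictAnti (D ω)} = 0 := by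
    refine measure_mono_null ?_ hinjNull
    intro ω hω
    simp only [Set.mem_setOf_eq] at hω ⊢
    intro hinj
    apply hω
    have hmono : Monotone (X ω ∘ Tuple.sort (X ω)) := Tuple.monotone_sort (X ω)
    have hinj2 : Function.Injective (X ω ∘ Tuple.sort (X ω)) :=
      hinj.comp (Equiv.injective _)
    have hsm : StrictMono (fun i => ascArr n (X ω) i) := hmono.strictMono_of_injective hinj2
    intro a b hab
    have : b.rev < a.rev := Fin.rev_lt_rev.mpr hab
    exact hsm this
  have hνSA : ν {x : Fin n → ℝ | StrictAnti x}ᶜ = 0 := by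
    rw [hνdef, Measure.map_apply hD measurableSet_SA.compl]
    exact hSADNull
  have hνIcc : ν {x : Fin n → ℝ | ∀ m, x m ∈ Set.Icc (0:ℝ) 1}ᶜ = 0 := by
    have hms : MeasurableSet {x : Fin n → ℝ | ∀ m, x m ∈ Set.Icc (0:ℝ) 1} := by
      have : {x : Fin n → ℝ | ∀ m, x m ∈ Set.Icc (0:ℝ) 1}
          = ⋂ m, (fun x : Fin n → ℝ => x m) ⁻¹' (Set.Icc (0:ℝ) 1) := by
        ext x; simp only [Set.mem_setOf_eq, Set.mem_iInter, Set.mem_preimage]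
      rw [this]
      exact MeasurableSet.iInter fun m => measurableSet_Icc.preimage (measurable_pi_apply m)
    rw [hνdef, Measure.map_apply hD hms.compl]
    refine measure_mono_null ?_ hIccNull
    intro ω hω
    simp only [Set.mem_preimage, Set.mem_compl_iff, Set.mem_setOf_eq, not_forall] at hω ⊢
    obtain ⟨m, hm⟩ := hω
    exact ⟨Tuple.sort (X ω) m.rev, hm⟩
  set F : Fin n → ℝ → ℝ≥0∞ := fun m t => ν {x | x m ≤ t} with hFdef
  have hF1 : ∀ m : Fin n, F m 1 = 1 := by
    intro m
    have hsub : {x : Fin n → ℝ | ∀ m, x m ∈ Set.Icc (0:ℝ) 1} ⊆ {x | x m ≤ 1} :=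
      fun x hx => (hx m).2
    have h1 : (1:ℝ≥0∞) = ν {x : Fin n → ℝ | ∀ m, x m ∈ Set.Icc (0:ℝ) 1} := by
      have := measure_add_measure_compl (μ := ν)
        (s := {x : Fin n → ℝ | ∀ m, x m ∈ Set.Icc (0:ℝ) 1}) ?_
      · rw [hνIcc, add_zero, measure_univ] at this
        exact this.symm
      · have : {x : Fin n → ℝ | ∀ m, x m ∈ Set.Icc (0:ℝ) 1}
            = ⋂ m, (fun x : Fin n → ℝ => x m) ⁻¹' (Set.Icc (0:ℝ) 1) := by
          ext x; simp only [Set.mem_setOf_eq, Set.mem_iInter, Set.mem_preimage]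
        rw [this]
        exact MeasurableSet.iInter fun m => measurableSet_Icc.preimage (measurable_pi_apply m)
    apply le_antisymm (prob_le_one)
    rw [h1]
    exact measure_mono hsub
  have hevm : ∀ m : Fin n, Measurable fun x : Fin n → ℝ => x m := fun m => measurable_pi_apply m
  have haeIcc : ∀ᵐ x ∂ν, ∀ m : Fin n, x m ∈ Set.Icc (0:ℝ) 1 := by
    rw [ae_iff]
    exact hνIcc
  have haeSA : ∀ᵐ x ∂ν, StrictAnti x := by
    rw [ae_iff]
    exact hνSA
  have hFinj : ∀ m1 m2 : Fin n, (∀ t, F m1 t = F m2 t) → m1 = m2 := by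
    have key : ∀ m1 m2 : Fin n, m1 < m2 → ¬ (∀ t, F m1 t = F m2 t) := by
      intro m1 m2 hlt hF
      have hlaws : ν.map (fun x => x m1) = ν.map (fun x => x m2) := by
        apply Measure.ext_of_Iic
        intro t
        rw [Measure.map_apply (hevm m1) measurableSet_Iic,
          Measure.map_apply (hevm m2) measurableSet_Iic]
        exact hF t
      have hint : ∀ m : Fin n, Integrable (fun x : Fin n → ℝ => x m) ν := by
        intro m
        refine Integrable.mono' (integrable_const (1:ℝ)) (hevm m).aestronglyMeasurable ?_
        refine haeIcc.mono fun x hx => ?_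
        rw [Real.norm_eq_abs, abs_le]
        exact ⟨by linarith [(hx m).1], (hx m).2⟩
      have hieq : ∫ x, x m1 ∂ν = ∫ x, x m2 ∂ν := by
        have h1 : ∫ x, x m1 ∂ν = ∫ y, y ∂(ν.map (fun x => x m1)) :=
          (integral_map (hevm m1).aemeasurable aestronglyMeasurable_id).symm
        have h2 : ∫ x, x m2 ∂ν = ∫ y, y ∂(ν.map (fun x => x m2)) :=
          (integral_map (hevm m2).aemeasurable aestronglyMeasurable_id).symm
        rw [h1, h2, hlaws]
      have hpos : ∀ᵐ x ∂ν, 0 < x m1 - x m2 :=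
        haeSA.mono fun x hx => sub_pos.mpr (hx hlt)
      have hgint : Integrable (fun x : Fin n → ℝ => x m1 - x m2) ν := (hint m1).sub (hint m2)
      have hzero : (fun x : Fin n → ℝ => x m1 - x m2) =ᵐ[ν] 0 := by
        rw [← integral_eq_zero_iff_of_nonneg_ae (hpos.mono fun x hx => le_of_lt hx) hgint]
        rw [integral_sub (hint m1) (hint m2), hieq, sub_self]
      have hcontr := hzero.and hpos
      have hne : ν ≠ 0 := IsProbabilityMeasure.ne_zero ν
      have : (MeasureTheory.ae ν).NeBot := ae_neBot.mpr hne
      obtain ⟨x, hx1, hx2⟩ := hcontr.exists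
      change x m1 - x m2 = (0 : ℝ) at hx1
      linarith
    intro m1 m2 h
    by_contra hne
    rcases lt_or_gt_of_ne hne with hc | hc
    · exact key m1 m2 hc h
    · exact key m2 m1 hc (fun t => (h t).symm)
  have hGoodc : P₁ {ω | StrictAnti (D ω)}ᶜ = 0 := hSADNull
  have htrans : ∀ (k : Fin n) (A : Set ({ℓ : Fin n // k < ℓ} → ℕ))
      (B : Set ({i : Fin n // i ≤ k} → ℝ)),
      MeasurableSet A → MeasurableSet B →
      P₁ ({ω | (fun ℓ : {ℓ : Fin n // k < ℓ} => irank (Z ω) ℓ.1) ∈ A}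
          ∩ {ω | (fun i : {i : Fin n // i ≤ k} => Z ω i.1) ∈ B})
        = P₁ {ω | (fun ℓ : {ℓ : Fin n // k < ℓ} => irank (Z ω) ℓ.1) ∈ A}
          * P₁ {ω | (fun i : {i : Fin n // i ≤ k} => Z ω i.1) ∈ B} := by
    intro k A B hA hB
    have hΦ : Measurable (fun y : Fin n → ℝ => fun ℓ : {ℓ : Fin n // k < ℓ} => irank y ℓ.1) :=
      measurable_pi_lambda _ (fun ℓ => measurable_irank ℓ.1)
    have hPi : Measurable (fun y : Fin n → ℝ => fun i : {i : Fin n // i ≤ k} => y i.1) :=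
      measurable_pi_lambda _ (fun i => measurable_pi_apply i.1)
    have hWmeas : ∀ S : Set (Fin n → ℝ), MeasurableSet S → P₁ (Z ⁻¹' S) = P₂ (Y ⁻¹' S) := by
      intro S hS
      rw [← Measure.map_apply hZm hS, ← Measure.map_apply hY hS, hlaw]
    have e1 : {ω | (fun ℓ : {ℓ : Fin n // k < ℓ} => irank (Z ω) ℓ.1) ∈ A}
        = Z ⁻¹' ((fun y : Fin n → ℝ => fun ℓ : {ℓ : Fin n // k < ℓ} => irank y ℓ.1) ⁻¹' A) := rfl
    have e2 : {ω | (fun i : {i : Fin n // i ≤ k} => Z ω i.1) ∈ B}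
        = Z ⁻¹' ((fun y : Fin n → ℝ => fun i : {i : Fin n // i ≤ k} => y i.1) ⁻¹' B) := rfl
    rw [e1, e2, ← Set.preimage_inter, hWmeas _ ((hΦ hA).inter (hPi hB)),
      hWmeas _ (hΦ hA), hWmeas _ (hPi hB)]
    exact (hSRI k).measure_inter_preimage_eq_mul A B hA hB
  -- the master identity
  have hmaster : ∀ (k : Fin n) (r : {ℓ : Fin n // k < ℓ} → ℕ) (c : ℕ) (t : ℝ),
      (∑ s : Equiv.Perm (Fin n), (if (∀ (ℓ : Fin n) (h : k < ℓ), pcode s ℓ = r ⟨ℓ, h⟩)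
          then (1:ℝ≥0∞) else 0) * ((if pcode s k = c then (1:ℝ≥0∞) else 0)
            * (F (s k) t * p s)))
      = (∑ s : Equiv.Perm (Fin n), (if (∀ (ℓ : Fin n) (h : k < ℓ), pcode s ℓ = r ⟨ℓ, h⟩)
          then (1:ℝ≥0∞) else 0) * p s)
        * (∑ s : Equiv.Perm (Fin n), (if pcode s k = c then (1:ℝ≥0∞) else 0)
            * (F (s k) t * p s)) := by
    intro k r c t
    set U : Set Ω₁ := {ω | (fun ℓ : {ℓ : Fin n // k < ℓ} => irank (Z ω) ℓ.1)
      ∈ ({r} : Set ({ℓ : Fin n // k < ℓ} → ℕ))} with hUdef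
    set Bct : Set ({i : Fin n // i ≤ k} → ℝ) :=
      {z | pat k z = c ∧ z ⟨k, le_refl k⟩ ≤ t} with hBctdef
    set V : Set Ω₁ := {ω | (fun i : {i : Fin n // i ≤ k} => Z ω i.1) ∈ Bct} with hVdef
    have hrsing : MeasurableSet ({r} : Set ({ℓ : Fin n // k < ℓ} → ℕ)) :=
      MeasurableSet.singleton r
    have hBctm : MeasurableSet Bct := by
      have : Bct = pat k ⁻¹' {c} ∩ (fun z : {i : Fin n // i ≤ k} → ℝ => z ⟨k, le_refl k⟩) ⁻¹' Set.Iic t := rfl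
      rw [this]
      exact ((measurable_pat k) (measurableSet_singleton c)).inter
        ((measurable_pi_apply _) measurableSet_Iic)
    have hUmeas : MeasurableSet U := by
      show MeasurableSet ((fun ω => (fun ℓ : {ℓ : Fin n // k < ℓ} => irank (Z ω) ℓ.1))
        ⁻¹' ({r} : Set ({ℓ : Fin n // k < ℓ} → ℕ)))
      exact ((measurable_pi_lambda (fun y : Fin n → ℝ => fun ℓ : {ℓ : Fin n // k < ℓ} =>
        irank y ℓ.1) (fun ℓ => measurable_irank ℓ.1)).comp hZm) hrsing
    have hVmeas : MeasurableSet V := by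
      show MeasurableSet ((fun ω => (fun i : {i : Fin n // i ≤ k} => Z ω i.1)) ⁻¹' Bct)
      exact ((measurable_pi_lambda (fun y : Fin n → ℝ => fun i : {i : Fin n // i ≤ k} => y i.1)
        (fun i => measurable_pi_apply i.1)).comp hZm) hBctm
    -- piece 1
    have piece1 : ∀ s : Equiv.Perm (Fin n), P₁ (U ∩ {ω | μ ω = s})
        = (if (∀ (ℓ : Fin n) (h : k < ℓ), pcode s ℓ = r ⟨ℓ, h⟩) then (1:ℝ≥0∞) else 0) * p s := by
      intro s
      rw [← meas_inter_conull P₁ hGoodc (U ∩ {ω | μ ω = s})]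
      by_cases hcond : ∀ (ℓ : Fin n) (h : k < ℓ), pcode s ℓ = r ⟨ℓ, h⟩
      · rw [if_pos hcond, one_mul]
        have he : U ∩ {ω | μ ω = s} ∩ {ω | StrictAnti (D ω)}
            = {ω | μ ω = s} ∩ {ω | StrictAnti (D ω)} := by
          apply Set.eq_of_subset_of_subset
          · rintro ω ⟨⟨_, hμs⟩, hsa⟩
            exact ⟨hμs, hsa⟩
          rintro ω ⟨hμs, hsa⟩
          refine ⟨⟨?_, hμs⟩, hsa⟩
          show (fun ℓ : {ℓ : Fin n // k < ℓ} => irank (Z ω) ℓ.1) ∈ ({r} : Set _)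
          rw [Set.mem_singleton_iff]
          funext ℓ
          rw [hZs s ω hμs, irank_comp (D ω) hsa s ℓ.1]
          exact hcond ℓ.1 ℓ.2
        rw [he, meas_inter_conull P₁ hGoodc]
      · rw [if_neg hcond, zero_mul]
        push_neg at hcond
        obtain ⟨ℓ0, h0, hne0⟩ := hcond
        have he : U ∩ {ω | μ ω = s} ∩ {ω | StrictAnti (D ω)} = ∅ := by
          apply Set.eq_empty_iff_forall_notMem.mpr
          rintro ω ⟨⟨hU, hμs⟩, hsa⟩
          have hμs' : μ ω = s := hμs
          have hsa' : StrictAnti (D ω) := hsa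
          have h1 : irank (Z ω) ℓ0 = r ⟨ℓ0, h0⟩ := by
            have h2 := Set.mem_singleton_iff.mp hU
            exact congrFun h2 ⟨ℓ0, h0⟩
          rw [hZs s ω hμs', irank_comp (D ω) hsa' s ℓ0] at h1
          exact hne0 h1
        rw [he]
        exact measure_empty
    -- piece 2
    have piece2 : ∀ s : Equiv.Perm (Fin n), P₁ (V ∩ {ω | μ ω = s})
        = (if pcode s k = c then (1:ℝ≥0∞) else 0) * (F (s k) t * p s) := by
      intro s
      set Bs : Set (Fin n → ℝ) :=
        (fun x : Fin n → ℝ => fun i : {i : Fin n // i ≤ k} => x (s i.1)) ⁻¹' Bct with hBsdef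
      have hBsm : MeasurableSet Bs :=
        (measurable_pi_lambda _ (fun i => measurable_pi_apply (s i.1))) hBctm
      have he : V ∩ {ω | μ ω = s} = {ω | D ω ∈ Bs} ∩ {ω | μ ω = s} := by
        ext ω
        simp only [Set.mem_inter_iff, Set.mem_setOf_eq]
        constructor
        · rintro ⟨hV, hμs⟩
          refine ⟨?_, hμs⟩
          show (fun i : {i : Fin n // i ≤ k} => D ω (s i.1)) ∈ Bct
          have : (fun i : {i : Fin n // i ≤ k} => Z ω i.1)
              = (fun i : {i : Fin n // i ≤ k} => D ω (s i.1)) := by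
            funext i; rw [hZD, hμs]
          rw [← this]
          exact hV
        · rintro ⟨hB, hμs⟩
          refine ⟨?_, hμs⟩
          show (fun i : {i : Fin n // i ≤ k} => Z ω i.1) ∈ Bct
          have : (fun i : {i : Fin n // i ≤ k} => Z ω i.1)
              = (fun i : {i : Fin n // i ≤ k} => D ω (s i.1)) := by
            funext i; rw [hZD, hμs]
          rw [this]
          exact hB
      rw [he, hindep s Bs hBsm]
      have hDB : P₁ {ω | D ω ∈ Bs} = ν Bs := (Measure.map_apply hD hBsm).symm
      rw [hDB]
      have hνBs : ν Bs = (if pcode s k = c then (1:ℝ≥0∞) else 0) * F (s k) t := by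
        rw [← meas_inter_conull ν hνSA Bs]
        by_cases hc : pcode s k = c
        · rw [if_pos hc, one_mul]
          have he2 : Bs ∩ {x : Fin n → ℝ | StrictAnti x}
              = {x : Fin n → ℝ | x (s k) ≤ t} ∩ {x : Fin n → ℝ | StrictAnti x} := by
            ext x
            simp only [Set.mem_inter_iff, Set.mem_setOf_eq, hBsdef, Set.mem_preimage, hBctdef]
            constructor
            · rintro ⟨⟨_, hle⟩, hsa⟩
              exact ⟨hle, hsa⟩
            · rintro ⟨hle, hsa⟩
              exact ⟨⟨by rw [pat_comp k x hsa s]; exact hc, hle⟩, hsa⟩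
          rw [he2, meas_inter_conull ν hνSA]
        · rw [if_neg hc, zero_mul]
          have he2 : Bs ∩ {x : Fin n → ℝ | StrictAnti x} = ∅ := by
            ext x
            simp only [Set.mem_inter_iff, Set.mem_empty_iff_false, iff_false, not_and, hBsdef,
              Set.mem_preimage, hBctdef, Set.mem_setOf_eq]
            intro hB hsa
            rw [pat_comp k x hsa s] at hB
            exact hc hB.1
          rw [he2]
          exact measure_empty
      rw [hνBs]
      ring
    -- piece 3
    have piece3 : ∀ s : Equiv.Perm (Fin n), P₁ ((U ∩ V) ∩ {ω | μ ω = s})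
        = (if (∀ (ℓ : Fin n) (h : k < ℓ), pcode s ℓ = r ⟨ℓ, h⟩) then (1:ℝ≥0∞) else 0)
          * ((if pcode s k = c then (1:ℝ≥0∞) else 0) * (F (s k) t * p s)) := by
      intro s
      by_cases hcond : ∀ (ℓ : Fin n) (h : k < ℓ), pcode s ℓ = r ⟨ℓ, h⟩
      · rw [if_pos hcond, one_mul, ← piece2 s]
        rw [← meas_inter_conull P₁ hGoodc ((U ∩ V) ∩ {ω | μ ω = s}),
          ← meas_inter_conull P₁ hGoodc (V ∩ {ω | μ ω = s})]
        congr 1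
        ext ω
        simp only [Set.mem_inter_iff, Set.mem_setOf_eq]
        constructor
        · rintro ⟨⟨⟨_, hV⟩, hμs⟩, hsa⟩
          exact ⟨⟨hV, hμs⟩, hsa⟩
        · rintro ⟨⟨hV, hμs⟩, hsa⟩
          refine ⟨⟨⟨?_, hV⟩, hμs⟩, hsa⟩
          show (fun ℓ : {ℓ : Fin n // k < ℓ} => irank (Z ω) ℓ.1) ∈ ({r} : Set _)
          rw [Set.mem_singleton_iff]
          funext ℓ
          rw [hZs s ω hμs, irank_comp (D ω) hsa s ℓ.1]
          exact hcond ℓ.1 ℓ.2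
      · rw [if_neg hcond, zero_mul]
        push_neg at hcond
        obtain ⟨ℓ0, h0, hne0⟩ := hcond
        rw [← meas_inter_conull P₁ hGoodc ((U ∩ V) ∩ {ω | μ ω = s})]
        have he : (U ∩ V) ∩ {ω | μ ω = s} ∩ {ω | StrictAnti (D ω)} = ∅ := by
          apply Set.eq_empty_iff_forall_notMem.mpr
          rintro ω ⟨⟨⟨hU, _⟩, hμs⟩, hsa⟩
          have hμs' : μ ω = s := hμs
          have hsa' : StrictAnti (D ω) := hsa
          have h1 : irank (Z ω) ℓ0 = r ⟨ℓ0, h0⟩ := by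
            have h2 := Set.mem_singleton_iff.mp hU
            exact congrFun h2 ⟨ℓ0, h0⟩
          rw [hZs s ω hμs', irank_comp (D ω) hsa' s ℓ0] at h1
          exact hne0 h1
        rw [he]
        exact measure_empty
    have hsum1 : P₁ U = ∑ s : Equiv.Perm (Fin n),
        (if (∀ (ℓ : Fin n) (h : k < ℓ), pcode s ℓ = r ⟨ℓ, h⟩) then (1:ℝ≥0∞) else 0) * p s := by
      rw [hpart U hUmeas]
      exact Finset.sum_congr rfl fun s _ => piece1 s
    have hsum2 : P₁ V = ∑ s : Equiv.Perm (Fin n),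
        (if pcode s k = c then (1:ℝ≥0∞) else 0) * (F (s k) t * p s) := by
      rw [hpart V hVmeas]
      exact Finset.sum_congr rfl fun s _ => piece2 s
    have hsum3 : P₁ (U ∩ V) = ∑ s : Equiv.Perm (Fin n),
        (if (∀ (ℓ : Fin n) (h : k < ℓ), pcode s ℓ = r ⟨ℓ, h⟩) then (1:ℝ≥0∞) else 0)
          * ((if pcode s k = c then (1:ℝ≥0∞) else 0) * (F (s k) t * p s)) := by
      rw [hpart (U ∩ V) (hUmeas.inter hVmeas)]
      exact Finset.sum_congr rfl fun s _ => piece3 s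
    rw [← hsum1, ← hsum2, ← hsum3]
    exact htrans k ({r} : Set _) Bct hrsing hBctm
  have hpnz : ∀ s : Equiv.Perm (Fin n), ¬ 0 < p s → p s = 0 := fun s h => by simpa using h
  have hFle1 : ∀ m t, F m t ≤ 1 := fun m t => prob_le_one
  -- the step lemma
  have step : ∀ k : Fin n, ∀ s1 s2 : Equiv.Perm (Fin n), 0 < p s1 → 0 < p s2 →
      (∀ s1' s2' : Equiv.Perm (Fin n), 0 < p s1' → 0 < p s2' →
        ∀ i : Fin n, i < k → s1' i = s2' i) →
      s1 k = s2 k := by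
    intro k s1 s2 h1 h2 hpre
    set r1 : {ℓ : Fin n // k < ℓ} → ℕ := fun ℓ => pcode s1 ℓ.1 with hr1def
    set r2 : {ℓ : Fin n // k < ℓ} → ℕ := fun ℓ => pcode s2 ℓ.1 with hr2def
    have hr1s1 : ∀ (ℓ : Fin n) (h : k < ℓ), pcode s1 ℓ = r1 ⟨ℓ, h⟩ := fun ℓ h => rfl
    have hr2s2 : ∀ (ℓ : Fin n) (h : k < ℓ), pcode s2 ℓ = r2 ⟨ℓ, h⟩ := fun ℓ h => rfl
    -- uniqueness of support elements with given rank data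
    have huniq : ∀ (r : {ℓ : Fin n // k < ℓ} → ℕ) (s s' : Equiv.Perm (Fin n)),
        0 < p s → 0 < p s' →
        (∀ (ℓ : Fin n) (h : k < ℓ), pcode s ℓ = r ⟨ℓ, h⟩) →
        (∀ (ℓ : Fin n) (h : k < ℓ), pcode s' ℓ = r ⟨ℓ, h⟩) → s = s' := by
      intro r s s' hs hs' hcs hcs'
      apply pcode_inj k s s' (hpre s s' hs hs')
      intro ℓ hℓ
      rw [hcs ℓ hℓ, hcs' ℓ hℓ]
    -- gaps are equal
    have hgap : pcode s1 k = pcode s2 k := by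
      by_contra hne
      have hm := hmaster k r1 (pcode s2 k) 1
      have hrhs1 : p s1 ≤ ∑ s : Equiv.Perm (Fin n),
          (if (∀ (ℓ : Fin n) (h : k < ℓ), pcode s ℓ = r1 ⟨ℓ, h⟩)
            then (1:ℝ≥0∞) else 0) * p s := by
        have heq : (if (∀ (ℓ : Fin n) (h : k < ℓ), pcode s1 ℓ = r1 ⟨ℓ, h⟩)
            then (1:ℝ≥0∞) else 0) * p s1 = p s1 := by rw [if_pos hr1s1, one_mul]
        calc p s1 = (if (∀ (ℓ : Fin n) (h : k < ℓ), pcode s1 ℓ = r1 ⟨ℓ, h⟩)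
              then (1:ℝ≥0∞) else 0) * p s1 := heq.symm
          _ ≤ _ := Finset.single_le_sum (f := fun s : Equiv.Perm (Fin n) =>
              (if (∀ (ℓ : Fin n) (h : k < ℓ), pcode s ℓ = r1 ⟨ℓ, h⟩) then (1:ℝ≥0∞) else 0) * p s)
              (fun s _ => zero_le) (Finset.mem_univ s1)
      have hrhs2 : p s2 ≤ ∑ s : Equiv.Perm (Fin n),
          (if pcode s k = pcode s2 k then (1:ℝ≥0∞) else 0) * (F (s k) 1 * p s) := by
        have heq : (if pcode s2 k = pcode s2 k then (1:ℝ≥0∞) else 0)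
            * (F (s2 k) 1 * p s2) = p s2 := by
          rw [if_pos rfl, one_mul, hF1 (s2 k), one_mul]
        calc p s2 = (if pcode s2 k = pcode s2 k then (1:ℝ≥0∞) else 0)
              * (F (s2 k) 1 * p s2) := heq.symm
          _ ≤ _ := Finset.single_le_sum (f := fun s : Equiv.Perm (Fin n) =>
              (if pcode s k = pcode s2 k then (1:ℝ≥0∞) else 0) * (F (s k) 1 * p s))
              (fun s _ => zero_le) (Finset.mem_univ s2)
      have hrhs : 0 < (∑ s : Equiv.Perm (Fin n),
          (if (∀ (ℓ : Fin n) (h : k < ℓ), pcode s ℓ = r1 ⟨ℓ, h⟩)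
            then (1:ℝ≥0∞) else 0) * p s)
          * (∑ s : Equiv.Perm (Fin n),
            (if pcode s k = pcode s2 k then (1:ℝ≥0∞) else 0) * (F (s k) 1 * p s)) :=
        ENNReal.mul_pos (fun hz => by rw [hz] at hrhs1; exact (h1.trans_le hrhs1).ne' rfl)
          (fun hz => by rw [hz] at hrhs2; exact (h2.trans_le hrhs2).ne' rfl)
      rw [← hm] at hrhs
      have hex : ∃ s3 : Equiv.Perm (Fin n),
          ((if (∀ (ℓ : Fin n) (h : k < ℓ), pcode s3 ℓ = r1 ⟨ℓ, h⟩) then (1:ℝ≥0∞) else 0)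
            * ((if pcode s3 k = pcode s2 k then (1:ℝ≥0∞) else 0) * (F (s3 k) 1 * p s3))) ≠ 0 := by
        by_contra hall
        push_neg at hall
        rw [Finset.sum_eq_zero (fun s _ => hall s)] at hrhs
        exact hrhs.ne' rfl
      obtain ⟨s3, hs3⟩ := hex
      by_cases hc1 : ∀ (ℓ : Fin n) (h : k < ℓ), pcode s3 ℓ = r1 ⟨ℓ, h⟩
      · by_cases hc2 : pcode s3 k = pcode s2 k
        · have hps3 : 0 < p s3 := by
            rcases (show (0:ℝ≥0∞) ≤ p s3 from zero_le).lt_or_eq with h | h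
            · exact h
            · exfalso; apply hs3; rw [← h]; ring
          have : s3 = s1 := huniq r1 s3 s1 hps3 h1 hc1 hr1s1
          rw [this] at hc2
          exact hne hc2
        · apply hs3; rw [if_neg hc2]; ring
      · apply hs3; rw [if_neg hc1]; ring
    -- the sum on the left collapses to a single term
    have hsum_one : ∀ (sx : Equiv.Perm (Fin n)) (rx : {ℓ : Fin n // k < ℓ} → ℕ),
        0 < p sx → (∀ (ℓ : Fin n) (h : k < ℓ), pcode sx ℓ = rx ⟨ℓ, h⟩) →
        pcode sx k = pcode s1 k →
        ∀ t : ℝ, (∑ s : Equiv.Perm (Fin n),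
          (if (∀ (ℓ : Fin n) (h : k < ℓ), pcode s ℓ = rx ⟨ℓ, h⟩) then (1:ℝ≥0∞) else 0)
            * ((if pcode s k = pcode s1 k then (1:ℝ≥0∞) else 0) * (F (s k) t * p s)))
          = F (sx k) t * p sx := by
      intro sx rx hpx hcx hg t
      have h0 : ∀ s : Equiv.Perm (Fin n), s ∈ Finset.univ → s ≠ sx →
          (if (∀ (ℓ : Fin n) (h : k < ℓ), pcode s ℓ = rx ⟨ℓ, h⟩) then (1:ℝ≥0∞) else 0)
            * ((if pcode s k = pcode s1 k then (1:ℝ≥0∞) else 0) * (F (s k) t * p s)) = 0 := by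
        intro s _ hne
        by_cases hps : 0 < p s
        · by_cases hc1 : ∀ (ℓ : Fin n) (h : k < ℓ), pcode s ℓ = rx ⟨ℓ, h⟩
          · exact absurd (huniq rx s sx hps hpx hc1 hcx) hne
          · rw [if_neg hc1, zero_mul]
        · rw [hpnz s hps, mul_zero, mul_zero, mul_zero]
      rw [Finset.sum_eq_single sx h0 (fun h => absurd (Finset.mem_univ _) h),
        if_pos hcx, if_pos hg, one_mul, one_mul]
    -- bounds for the sums
    have hPrle1 : ∀ rx : {ℓ : Fin n // k < ℓ} → ℕ, (∑ s : Equiv.Perm (Fin n),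
        (if (∀ (ℓ : Fin n) (h : k < ℓ), pcode s ℓ = rx ⟨ℓ, h⟩) then (1:ℝ≥0∞) else 0) * p s)
        ≤ 1 := by
      intro rx
      calc (∑ s : Equiv.Perm (Fin n),
          (if (∀ (ℓ : Fin n) (h : k < ℓ), pcode s ℓ = rx ⟨ℓ, h⟩) then (1:ℝ≥0∞) else 0) * p s)
          ≤ ∑ s : Equiv.Perm (Fin n), p s := by
            apply Finset.sum_le_sum
            intro s _
            by_cases hc : ∀ (ℓ : Fin n) (h : k < ℓ), pcode s ℓ = rx ⟨ℓ, h⟩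
            · rw [if_pos hc, one_mul]
            · simp [hc]
        _ = 1 := hpsum
    have hPrge : ∀ (sx : Equiv.Perm (Fin n)) (rx : {ℓ : Fin n // k < ℓ} → ℕ),
        (∀ (ℓ : Fin n) (h : k < ℓ), pcode sx ℓ = rx ⟨ℓ, h⟩) →
        p sx ≤ (∑ s : Equiv.Perm (Fin n),
          (if (∀ (ℓ : Fin n) (h : k < ℓ), pcode s ℓ = rx ⟨ℓ, h⟩) then (1:ℝ≥0∞) else 0) * p s) := by
      intro sx rx hcx
      have heq : (if (∀ (ℓ : Fin n) (h : k < ℓ), pcode sx ℓ = rx ⟨ℓ, h⟩)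
          then (1:ℝ≥0∞) else 0) * p sx = p sx := by rw [if_pos hcx, one_mul]
      calc p sx = _ := heq.symm
        _ ≤ _ := Finset.single_le_sum (f := fun s : Equiv.Perm (Fin n) =>
            (if (∀ (ℓ : Fin n) (h : k < ℓ), pcode s ℓ = rx ⟨ℓ, h⟩) then (1:ℝ≥0∞) else 0) * p s)
            (fun s _ => zero_le) (Finset.mem_univ sx)
    have hGle1 : ∀ t : ℝ, (∑ s : Equiv.Perm (Fin n),
        (if pcode s k = pcode s1 k then (1:ℝ≥0∞) else 0) * (F (s k) t * p s)) ≤ 1 := by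
      intro t
      calc (∑ s : Equiv.Perm (Fin n),
          (if pcode s k = pcode s1 k then (1:ℝ≥0∞) else 0) * (F (s k) t * p s))
          ≤ ∑ s : Equiv.Perm (Fin n), p s := by
            apply Finset.sum_le_sum
            intro s _
            by_cases hc : pcode s k = pcode s1 k
            · rw [if_pos hc, one_mul]
              calc F (s k) t * p s ≤ 1 * p s := mul_le_mul_left (hFle1 _ _) _
                _ = p s := one_mul _
            · simp [hc]
        _ = 1 := hpsum
    have hGge : p s1 ≤ (∑ s : Equiv.Perm (Fin n),
        (if pcode s k = pcode s1 k then (1:ℝ≥0∞) else 0) * (F (s k) 1 * p s)) := by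
      have heq : (if pcode s1 k = pcode s1 k then (1:ℝ≥0∞) else 0) * (F (s1 k) 1 * p s1)
          = p s1 := by rw [if_pos rfl, one_mul, hF1, one_mul]
      calc p s1 = _ := heq.symm
        _ ≤ _ := Finset.single_le_sum (f := fun s : Equiv.Perm (Fin n) =>
            (if pcode s k = pcode s1 k then (1:ℝ≥0∞) else 0) * (F (s k) 1 * p s))
            (fun s _ => zero_le) (Finset.mem_univ s1)
    -- abbreviations
    set Pr1 : ℝ≥0∞ := ∑ s : Equiv.Perm (Fin n),
      (if (∀ (ℓ : Fin n) (h : k < ℓ), pcode s ℓ = r1 ⟨ℓ, h⟩) then (1:ℝ≥0∞) else 0) * p s with hPr1def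
    set Pr2 : ℝ≥0∞ := ∑ s : Equiv.Perm (Fin n),
      (if (∀ (ℓ : Fin n) (h : k < ℓ), pcode s ℓ = r2 ⟨ℓ, h⟩) then (1:ℝ≥0∞) else 0) * p s with hPr2def
    have hA1 : ∀ t : ℝ, F (s1 k) t * p s1 = Pr1 * (∑ s : Equiv.Perm (Fin n),
        (if pcode s k = pcode s1 k then (1:ℝ≥0∞) else 0) * (F (s k) t * p s)) := by
      intro t
      rw [← hsum_one s1 r1 h1 hr1s1 rfl t]
      exact hmaster k r1 (pcode s1 k) t
    have hA2 : ∀ t : ℝ, F (s2 k) t * p s2 = Pr2 * (∑ s : Equiv.Perm (Fin n),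
        (if pcode s k = pcode s1 k then (1:ℝ≥0∞) else 0) * (F (s k) t * p s)) := by
      intro t
      rw [← hsum_one s2 r2 h2 hr2s2 hgap.symm t]
      exact hmaster k r2 (pcode s1 k) t
    have hPr1pos : Pr1 ≠ 0 := by
      intro hz
      have hle : p s1 ≤ Pr1 := hPrge s1 r1 hr1s1
      rw [hz] at hle
      exact absurd (h1.trans_le hle) (lt_irrefl 0)
    have hPr2pos : Pr2 ≠ 0 := by
      intro hz
      have hle : p s2 ≤ Pr2 := hPrge s2 r2 hr2s2
      rw [hz] at hle
      exact absurd (h2.trans_le hle) (lt_irrefl 0)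
    have hPr1top : Pr1 ≠ ⊤ := (lt_of_le_of_lt (hPrle1 r1) (by norm_num)).ne
    have hPr2top : Pr2 ≠ ⊤ := (lt_of_le_of_lt (hPrle1 r2) (by norm_num)).ne
    have hG1pos : (∑ s : Equiv.Perm (Fin n),
        (if pcode s k = pcode s1 k then (1:ℝ≥0∞) else 0) * (F (s k) 1 * p s)) ≠ 0 :=
      by
        intro hz
        rw [hz] at hGge
        exact absurd (h1.trans_le hGge) (lt_irrefl 0)
    have hG1top : (∑ s : Equiv.Perm (Fin n),
        (if pcode s k = pcode s1 k then (1:ℝ≥0∞) else 0) * (F (s k) 1 * p s)) ≠ ⊤ :=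
      (lt_of_le_of_lt (hGle1 1) (by norm_num)).ne
    -- deduce F (s1 k) = F (s2 k)
    have hFeq : ∀ t : ℝ, F (s1 k) t = F (s2 k) t := by
      intro t
      have e1 : F (s1 k) t * (∑ s : Equiv.Perm (Fin n),
          (if pcode s k = pcode s1 k then (1:ℝ≥0∞) else 0) * (F (s k) 1 * p s))
          = (∑ s : Equiv.Perm (Fin n),
            (if pcode s k = pcode s1 k then (1:ℝ≥0∞) else 0) * (F (s k) t * p s)) := by
        have h11 := hA1 1
        rw [hF1, one_mul] at h11
        have ht1 := hA1 t
        rw [h11] at ht1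
        have : Pr1 * (F (s1 k) t * (∑ s : Equiv.Perm (Fin n),
            (if pcode s k = pcode s1 k then (1:ℝ≥0∞) else 0) * (F (s k) 1 * p s)))
            = Pr1 * (∑ s : Equiv.Perm (Fin n),
              (if pcode s k = pcode s1 k then (1:ℝ≥0∞) else 0) * (F (s k) t * p s)) := by
          rw [← ht1]; ring
        exact (ENNReal.mul_right_inj hPr1pos hPr1top).mp this
      have e2 : F (s2 k) t * (∑ s : Equiv.Perm (Fin n),
          (if pcode s k = pcode s1 k then (1:ℝ≥0∞) else 0) * (F (s k) 1 * p s))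
          = (∑ s : Equiv.Perm (Fin n),
            (if pcode s k = pcode s1 k then (1:ℝ≥0∞) else 0) * (F (s k) t * p s)) := by
        have h11 := hA2 1
        rw [hF1, one_mul] at h11
        have ht1 := hA2 t
        rw [h11] at ht1
        have : Pr2 * (F (s2 k) t * (∑ s : Equiv.Perm (Fin n),
            (if pcode s k = pcode s1 k then (1:ℝ≥0∞) else 0) * (F (s k) 1 * p s)))
            = Pr2 * (∑ s : Equiv.Perm (Fin n),
              (if pcode s k = pcode s1 k then (1:ℝ≥0∞) else 0) * (F (s k) t * p s)) := by
          rw [← ht1]; ring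
        exact (ENNReal.mul_right_inj hPr2pos hPr2top).mp this
      have := e1.trans e2.symm
      exact (ENNReal.mul_left_inj hG1pos hG1top).mp this
    exact hFinj (s1 k) (s2 k) hFeq
  -- pointwise agreement of support permutations, by induction on positions
  have agree : ∀ (m : ℕ), ∀ s1 s2 : Equiv.Perm (Fin n), 0 < p s1 → 0 < p s2 →
      ∀ i : Fin n, (i : ℕ) < m → s1 i = s2 i := by
    intro m
    induction m with
    | zero => intro s1 s2 _ _ i hi; exact absurd hi (Nat.not_lt_zero _)
    | succ m ih =>
      intro s1 s2 h1 h2 i hi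
      rcases Nat.lt_or_ge (i : ℕ) m with hc | hc
      · exact ih s1 s2 h1 h2 i hc
      · have him : (i : ℕ) = m := by omega
        apply step i s1 s2 h1 h2
        intro s1' s2' h1' h2' j hj
        apply ih s1' s2' h1' h2' j
        have : (j : ℕ) < (i : ℕ) := hj
        omega
  have hunique : ∀ s1 s2 : Equiv.Perm (Fin n), 0 < p s1 → 0 < p s2 → s1 = s2 := by
    intro s1 s2 h1 h2
    exact Equiv.ext fun i => agree n s1 s2 h1 h2 i i.isLt
  have hppos_exists : ∃ s : Equiv.Perm (Fin n), 0 < p s := by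
    by_contra h
    push_neg at h
    have hz : ∑ s : Equiv.Perm (Fin n), p s = 0 :=
      Finset.sum_eq_zero (fun s _ => hpnz s (by exact fun hc => absurd hc (not_lt.mpr (h s))))
    rw [hpsum] at hz
    exact one_ne_zero hz
  obtain ⟨s0, hs0⟩ := hppos_exists
  have hp1 : p s0 = 1 := by
    rw [← hpsum]
    symm
    apply Finset.sum_eq_single s0
    · intro s _ hne
      by_contra hps
      have hpos : 0 < p s := lt_of_le_of_ne zero_le (Ne.symm hps)
      exact hne (hunique s s0 hpos hs0)
    · intro h; exact absurd (Finset.mem_univ _) h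
  refine ⟨s0, hp1, ?_⟩
  rw [hlaw]
  apply Measure.map_congr
  have hae : ∀ᵐ ω ∂P₁, μ ω = s0 := by
    rw [ae_iff]
    have he : {ω | ¬ μ ω = s0} = {ω | μ ω = s0}ᶜ := rfl
    rw [he, measure_compl (hμmeas s0) (measure_ne_top _ _), measure_univ]
    have : P₁ {ω | μ ω = s0} = 1 := hp1
    rw [this]
    simp
  apply hae.mono
  intro ω hω
  show Z ω = fun i => descArr n (X ω) (s0 i)
  funext i
  show descArr n (X ω) (μ ω i) = descArr n (X ω) (s0 i)
  rw [hω]
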